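/- Let D be a finite multiset of points (b,d) in the plane with b < d, and let σ > 0. Then the L¹-norm of G_D(t) = Σ_{(b,d)∈D} Φ((t−b)/σ)·Φ((d−t)/σ) equals Σ_{(b,d)∈D} [(d−b)·Φ((d−b)/(√2σ)) + √2·σ·φ((d−b)/(√2σ))]. -/

import Mathlib

open MeasureTheory Real Filter Topology

noncomputable def phi (t : ℝ) : ℝ := Real.exp (-t^2/2) / Real.sqrt (2*Real.pi)
noncomputable def Phi (x : ℝ) : ℝ := ∫ s in Set.Iic x, phi s

lemma sqrt2pi_pos : (0:ℝ) < Real.sqrt (2*Real.pi) := Real.sqrt_pos.2 (by positivity)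

lemma phi_pos (t : ℝ) : 0 < phi t := div_pos (Real.exp_pos _) sqrt2pi_pos

lemma phi_nonneg (t : ℝ) : 0 ≤ phi t := (phi_pos t).le

lemma continuous_phi : Continuous phi := by unfold phi; fun_prop

lemma phi_eq : phi = fun t => (Real.sqrt (2*Real.pi))⁻¹ * Real.exp (-(1/2) * t^2) := by
  funext t
  rw [phi, div_eq_inv_mul]
  ring_nf

lemma integrable_phi : Integrable phi := by
  rw [phi_eq]
  exact (integrable_exp_neg_mul_sq (by norm_num)).const_mul _

lemma integral_phi : ∫ t, phi t = 1 := by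
  conv_lhs => rw [phi_eq]
  rw [integral_const_mul, integral_gaussian]
  rw [show Real.pi / (1/2) = 2 * Real.pi by ring]
  exact inv_mul_cancel₀ sqrt2pi_pos.ne'

lemma phi_le (t : ℝ) : phi t ≤ (Real.sqrt (2*Real.pi))⁻¹ := by
  rw [phi, div_le_iff₀ sqrt2pi_pos, inv_mul_cancel₀ sqrt2pi_pos.ne']
  exact Real.exp_le_one_iff.2 (by nlinarith [sq_nonneg t])

lemma Phi_nonneg (x : ℝ) : 0 ≤ Phi x :=
  setIntegral_nonneg measurableSet_Iic fun t _ => phi_nonneg t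

lemma Phi_le_one (x : ℝ) : Phi x ≤ 1 := by
  rw [← integral_phi]
  exact setIntegral_le_integral integrable_phi (ae_of_all _ phi_nonneg)

lemma Phi_mono : Monotone Phi := fun x y hxy =>
  setIntegral_mono_set integrable_phi.integrableOn (ae_of_all _ phi_nonneg)
    (HasSubset.Subset.eventuallyLE (Set.Iic_subset_Iic.2 hxy))

lemma hasDerivAt_Phi (x : ℝ) : HasDerivAt Phi (phi x) x := by
  have h : ∀ y : ℝ, Phi y = Phi 0 + ∫ t in (0:ℝ)..y, phi t := by
    intro y
    rw [← intervalIntegral.integral_Iic_sub_Iic integrable_phi.integrableOn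
      integrable_phi.integrableOn]
    show Phi y = Phi 0 + (Phi y - Phi 0)
    ring
  have hd : HasDerivAt (fun y => ∫ t in (0:ℝ)..y, phi t) (phi x) x := by
    apply intervalIntegral.integral_hasDerivAt_right
      (continuous_phi.intervalIntegrable 0 x)
      continuous_phi.stronglyMeasurable.stronglyMeasurableAtFilter
      continuous_phi.continuousAt
  exact ((hd.const_add (Phi 0)).congr_of_eventuallyEq (Eventually.of_forall h))

lemma continuous_Phi : Continuous Phi := by
  have : Differentiable ℝ Phi := fun x => (hasDerivAt_Phi x).differentiableAt
  exact this.continuous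

lemma tendsto_Phi_atBot : Tendsto Phi atBot (𝓝 0) := by
  have h : Phi = fun x => ∫ t, Set.indicator (Set.Iic x) phi t := by
    funext x; rw [integral_indicator measurableSet_Iic]; rfl
  rw [h]
  have h0 : (∫ t : ℝ, (0:ℝ)) = 0 := integral_zero _ _
  rw [← h0]
  apply tendsto_integral_filter_of_dominated_convergence phi
  · exact Eventually.of_forall fun x =>
      integrable_phi.aestronglyMeasurable.indicator measurableSet_Iic
  · refine Eventually.of_forall fun x => ae_of_all _ fun t => ?_
    rw [Real.norm_eq_abs, abs_of_nonneg (Set.indicator_nonneg (fun s _ => phi_nonneg s) t)]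
    exact Set.indicator_le_self' (fun s _ => phi_nonneg s) t
  · exact integrable_phi
  · refine ae_of_all _ fun t => ?_
    have hev : ∀ᶠ x : ℝ in atBot, Set.indicator (Set.Iic x) phi t = 0 := by
      filter_upwards [eventually_lt_atBot t] with x hx
      exact Set.indicator_of_notMem (by simpa using hx) _
    exact Tendsto.congr' (hev.mono fun x hx => hx.symm) tendsto_const_nhds

lemma exp_neg_phi_eq : (fun s => Real.exp (-s) * phi s)
    = fun s => Real.exp (2⁻¹) * phi (s+1) := by
  funext s
  have h : Real.exp (-s) * Real.exp (-s^2/2) = Real.exp (2⁻¹) * Real.exp (-(s+1)^2/2) := by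
    rw [← Real.exp_add, ← Real.exp_add]; congr 1; ring
  simp only [phi]
  rw [mul_div_assoc', h, mul_div_assoc']

lemma integrable_exp_neg_phi : Integrable (fun s => Real.exp (-s) * phi s) := by
  rw [exp_neg_phi_eq]
  exact (integrable_phi.comp_add_right 1).const_mul _

lemma integral_exp_neg_phi : ∫ s, Real.exp (-s) * phi s = Real.exp (2⁻¹) := by
  rw [exp_neg_phi_eq]
  rw [integral_const_mul, integral_add_right_eq_self phi 1, integral_phi, mul_one]

lemma Phi_le_exp (c : ℝ) : Phi c ≤ Real.exp (2⁻¹) * Real.exp c := by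
  have heq : (fun s => Real.exp (c - s) * phi s)
      = fun s => Real.exp c * (Real.exp (-s) * phi s) := by
    funext s; rw [← mul_assoc, ← Real.exp_add]; ring_nf
  have hint : Integrable (fun s => Real.exp (c - s) * phi s) := by
    rw [heq]; exact integrable_exp_neg_phi.const_mul _
  have h1 : Phi c ≤ ∫ s in Set.Iic c, Real.exp (c - s) * phi s := by
    apply setIntegral_mono_on integrable_phi.integrableOn hint.integrableOn measurableSet_Iic
    intro s hs
    nth_rewrite 1 [← one_mul (phi s)]
    exact mul_le_mul_of_nonneg_right (Real.one_le_exp (by simp at hs; linarith)) (phi_nonneg s)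
  have h2 : (∫ s in Set.Iic c, Real.exp (c - s) * phi s) ≤ ∫ s, Real.exp (c - s) * phi s :=
    setIntegral_le_integral hint (ae_of_all _ fun s => mul_nonneg (Real.exp_nonneg _) (phi_nonneg s))
  have h3 : (∫ s, Real.exp (c - s) * phi s) = Real.exp (2⁻¹) * Real.exp c := by
    rw [heq, integral_const_mul, integral_exp_neg_phi, mul_comm]
  linarith

lemma integrable_exp_neg_abs : Integrable (fun u : ℝ => Real.exp (-|u|)) := by
  rw [← integrableOn_univ, ← Set.Iic_union_Ioi (a := (0:ℝ)), integrableOn_union]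
  constructor
  · exact (integrableOn_exp_Iic 0).congr_fun
      (fun u hu => by rw [abs_of_nonpos (Set.mem_Iic.1 hu), neg_neg]) measurableSet_Iic
  · refine ((exp_neg_integrableOn_Ioi 0 one_pos).congr_fun
      (fun u hu => ?_) measurableSet_Ioi)
    rw [abs_of_nonneg (le_of_lt (Set.mem_Ioi.1 hu))]; ring_nf

lemma integrable_of_le_exp_neg_abs {f : ℝ → ℝ} (C : ℝ) (hf : Continuous f)
    (h : ∀ u, |f u| ≤ C * Real.exp (-|u|)) : Integrable f := by
  refine Integrable.mono (integrable_exp_neg_abs.const_mul C) hf.aestronglyMeasurable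
    (ae_of_all _ fun u => ?_)
  rw [Real.norm_eq_abs, Real.norm_eq_abs]
  exact (h u).trans (le_abs_self _)

lemma integrable_PhiPhi (a : ℝ) : Integrable (fun u => Phi u * Phi (a - u)) := by
  apply integrable_of_le_exp_neg_abs (Real.exp (2⁻¹) * (1 + Real.exp a))
  · exact continuous_Phi.mul (continuous_Phi.comp (continuous_const.sub continuous_id))
  intro u
  rw [abs_of_nonneg (mul_nonneg (Phi_nonneg _) (Phi_nonneg _))]
  rcases le_total u 0 with h | h
  · have h1 : Phi u ≤ Real.exp (2⁻¹) * Real.exp (-|u|) := by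
      rw [abs_of_nonpos h, neg_neg]; exact Phi_le_exp u
    have h2 := mul_le_mul h1 (Phi_le_one (a - u)) (Phi_nonneg _)
      (by positivity)
    calc Phi u * Phi (a - u) ≤ Real.exp (2⁻¹) * Real.exp (-|u|) * 1 := h2
    _ ≤ Real.exp (2⁻¹) * (1 + Real.exp a) * Real.exp (-|u|) := by
        nlinarith [mul_pos (mul_pos (Real.exp_pos (2⁻¹:ℝ)) (Real.exp_pos a))
          (Real.exp_pos (-|u|))]
  · have h1 : Phi (a - u) ≤ Real.exp (2⁻¹) * (Real.exp a * Real.exp (-|u|)) := by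
      rw [abs_of_nonneg h, ← Real.exp_add]
      have : a + -u = a - u := by ring
      rw [this]; exact Phi_le_exp (a - u)
    have h2 := mul_le_mul (Phi_le_one u) h1 (Phi_nonneg _) zero_le_one
    calc Phi u * Phi (a - u) ≤ 1 * (Real.exp (2⁻¹) * (Real.exp a * Real.exp (-|u|))) := h2
    _ ≤ Real.exp (2⁻¹) * (1 + Real.exp a) * Real.exp (-|u|) := by
        nlinarith [mul_pos (Real.exp_pos (2⁻¹:ℝ)) (Real.exp_pos (-|u|))]

lemma conv_phi_phi (c : ℝ) : ∫ s, phi s * phi (c - s)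
    = Real.exp (-c^2/4) / (2 * Real.sqrt Real.pi) := by
  have h2π : Real.sqrt (2*Real.pi) * Real.sqrt (2*Real.pi) = 2*Real.pi :=
    Real.mul_self_sqrt (by positivity)
  have h : (fun s => phi s * phi (c - s))
      = fun s => (Real.exp (-c^2/4) / (2*Real.pi)) * Real.exp (-(1:ℝ) * (s - c/2)^2) := by
    funext s
    simp only [phi]
    rw [div_mul_div_comm, h2π, ← Real.exp_add, div_mul_eq_mul_div, ← Real.exp_add]
    congr 1
    ring
  rw [h, integral_const_mul, integral_sub_right_eq_self (fun s => Real.exp (-(1:ℝ) * s^2)) (c/2),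
    integral_gaussian, div_one]
  have hπ : Real.sqrt Real.pi * Real.sqrt Real.pi = Real.pi := Real.mul_self_sqrt Real.pi_pos.le
  have h2 : Real.sqrt Real.pi ≠ 0 := by positivity
  field_simp
  linear_combination hπ

lemma integrable_phi_mul_Phi (c : ℝ) : Integrable (fun s => phi s * Phi (c - s)) := by
  refine Integrable.mono integrable_phi
    ((continuous_phi.mul (continuous_Phi.comp (continuous_const.sub continuous_id))).aestronglyMeasurable)
    (ae_of_all _ fun s => ?_)
  rw [Real.norm_eq_abs, Real.norm_eq_abs,
    abs_of_nonneg (mul_nonneg (phi_nonneg s) (Phi_nonneg _)), abs_of_nonneg (phi_nonneg s)]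
  nth_rewrite 2 [← mul_one (phi s)]
  exact mul_le_mul_of_nonneg_left (Phi_le_one _) (phi_nonneg s)

lemma hasDerivAt_convL (c : ℝ) :
    HasDerivAt (fun x => ∫ s, phi s * Phi (x - s)) (∫ s, phi s * phi (c - s)) c := by
  have key := hasDerivAt_integral_of_dominated_loc_of_deriv_le (μ := volume) (x₀ := c)
    (F := fun x s => phi s * Phi (x - s)) (F' := fun x s => phi s * phi (x - s))
    (bound := fun s => phi s * (Real.sqrt (2*Real.pi))⁻¹) (Metric.ball_mem_nhds c one_pos)
    (Eventually.of_forall fun x =>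
      ((continuous_phi.mul (continuous_Phi.comp (continuous_const.sub continuous_id))).aestronglyMeasurable))
    (integrable_phi_mul_Phi c)
    ((continuous_phi.mul (continuous_phi.comp (continuous_const.sub continuous_id))).aestronglyMeasurable)
    (ae_of_all _ fun s x _ => ?_) (integrable_phi.mul_const _)
    (ae_of_all _ fun s x _ => ?_)
  · exact key.2
  · rw [Real.norm_eq_abs, abs_of_nonneg (mul_nonneg (phi_nonneg s) (phi_nonneg _))]
    exact mul_le_mul_of_nonneg_left (phi_le _) (phi_nonneg s)
  · have h1 : HasDerivAt (fun x : ℝ => x - s) 1 x := (hasDerivAt_id x).sub_const s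
    have h2 := (hasDerivAt_Phi (x - s)).comp x h1
    rw [mul_one] at h2
    exact h2.const_mul (phi s)

lemma tendsto_convL_atBot : Tendsto (fun c => ∫ s, phi s * Phi (c - s)) atBot (𝓝 0) := by
  have h0 : (∫ t : ℝ, (0:ℝ)) = 0 := integral_zero _ _
  rw [← h0]
  apply tendsto_integral_filter_of_dominated_convergence phi
  · exact Eventually.of_forall fun x =>
      ((continuous_phi.mul (continuous_Phi.comp (continuous_const.sub continuous_id))).aestronglyMeasurable)
  · refine Eventually.of_forall fun x => ae_of_all _ fun s => ?_
    rw [Real.norm_eq_abs, abs_of_nonneg (mul_nonneg (phi_nonneg s) (Phi_nonneg _))]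
    nth_rewrite 2 [← mul_one (phi s)]
    exact mul_le_mul_of_nonneg_left (Phi_le_one _) (phi_nonneg s)
  · exact integrable_phi
  · refine ae_of_all _ fun s => ?_
    have h1 : Tendsto (fun c : ℝ => c - s) atBot atBot := tendsto_atBot_add_const_right _ (-s)
      (by exact tendsto_id)
    have h2 : Tendsto (fun c : ℝ => Phi (c - s)) atBot (𝓝 0) := by
      have := tendsto_Phi_atBot.comp h1
      simpa [Function.comp_def, sub_eq_add_neg] using this
    simpa using h2.const_mul (phi s)

lemma sqrt_two_pos : (0:ℝ) < Real.sqrt 2 := Real.sqrt_pos.2 (by norm_num)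

lemma phi_div_sqrt2 (c : ℝ) :
    phi (c / Real.sqrt 2) * (Real.sqrt 2)⁻¹ = Real.exp (-c^2/4) / (2 * Real.sqrt Real.pi) := by
  have h2 : (Real.sqrt 2) * (Real.sqrt 2) = 2 := Real.mul_self_sqrt (by norm_num)
  have harg : -(c / Real.sqrt 2)^2/2 = -c^2/4 := by
    rw [div_pow, Real.sq_sqrt (by norm_num : (0:ℝ) ≤ 2)]
    ring
  rw [phi, harg, Real.sqrt_mul (by norm_num : (0:ℝ) ≤ 2)]
  have ha : Real.sqrt 2 ≠ 0 := by positivity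
  have hb : Real.sqrt Real.pi ≠ 0 := by positivity
  field_simp
  nlinarith [h2]

lemma hasDerivAt_R (c : ℝ) :
    HasDerivAt (fun x : ℝ => Phi (x / Real.sqrt 2)) (phi (c / Real.sqrt 2) * (Real.sqrt 2)⁻¹) c := by
  have h1 : HasDerivAt (fun x : ℝ => x / Real.sqrt 2) (Real.sqrt 2)⁻¹ c := by
    simpa [one_div] using (hasDerivAt_id c).div_const (Real.sqrt 2)
  exact (hasDerivAt_Phi (c / Real.sqrt 2)).comp c h1

lemma tendsto_R_atBot : Tendsto (fun x : ℝ => Phi (x / Real.sqrt 2)) atBot (𝓝 0) := by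
  have h1 : Tendsto (fun x : ℝ => x / Real.sqrt 2) atBot atBot :=
    tendsto_id.atBot_div_const sqrt_two_pos
  exact tendsto_Phi_atBot.comp h1

lemma conv_phi_Phi (c : ℝ) : ∫ s, phi s * Phi (c - s) = Phi (c / Real.sqrt 2) := by
  set L := fun c : ℝ => ∫ s, phi s * Phi (c - s) with hL
  set R := fun c : ℝ => Phi (c / Real.sqrt 2) with hR
  have hder : ∀ x : ℝ, HasDerivAt (fun y => L y - R y) 0 x := by
    intro x
    have h1 := hasDerivAt_convL x
    have h2 := hasDerivAt_R x
    have h3 : (∫ s, phi s * phi (x - s)) = phi (x / Real.sqrt 2) * (Real.sqrt 2)⁻¹ := by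
      rw [conv_phi_phi, phi_div_sqrt2]
    rw [h3] at h1
    have h4 := h1.sub h2; rw [sub_self] at h4; exact h4
  have hconst : ∀ x y : ℝ, L x - R x = L y - R y := fun x y =>
    is_const_of_deriv_eq_zero (fun z => (hder z).differentiableAt) (fun z => (hder z).deriv) x y
  have h0 : Tendsto (fun x => L x - R x) atBot (𝓝 0) := by
    simpa using tendsto_convL_atBot.sub tendsto_R_atBot
  have h1 : Tendsto (fun x => L x - R x) atBot (𝓝 (L c - R c)) := by
    have he : (fun x => L x - R x) = fun _ => L c - R c := funext fun x => hconst x c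
    rw [he]; exact tendsto_const_nhds
  have := tendsto_nhds_unique h1 h0
  have : L c - R c = 0 := this
  linarith

lemma integral_reflect (g : ℝ → ℝ) (a : ℝ) : ∫ v, g (a - v) = ∫ v, g v := by
  have h1 : (fun v => g (a - v)) = fun v => (fun w => g (-w)) (v - a) := by
    funext v; congr 1; ring
  rw [h1, integral_sub_right_eq_self (fun w => g (-w)) a, integral_neg_eq_self]

lemma hasDerivAt_F (a : ℝ) :
    HasDerivAt (fun x => ∫ u, Phi u * Phi (x - u)) (Phi (a / Real.sqrt 2)) a := by
  have hbound_int : Integrable (fun u =>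
      (Real.sqrt (2*Real.pi))⁻¹ * Real.exp (2⁻¹) * Real.exp (-(4⁻¹:ℝ) * (u - a)^2)) := by
    exact ((integrable_exp_neg_mul_sq (by norm_num : (0:ℝ) < 4⁻¹)).comp_sub_right a).const_mul _
  have key := hasDerivAt_integral_of_dominated_loc_of_deriv_le (μ := volume) (x₀ := a)
    (F := fun x u => Phi u * Phi (x - u)) (F' := fun x u => Phi u * phi (x - u))
    (bound := fun u => (Real.sqrt (2*Real.pi))⁻¹ * Real.exp (2⁻¹) * Real.exp (-(4⁻¹:ℝ) * (u - a)^2))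
    (Metric.ball_mem_nhds a one_pos)
    (Eventually.of_forall fun x =>
      ((continuous_Phi.mul (continuous_Phi.comp (continuous_const.sub continuous_id))).aestronglyMeasurable))
    (integrable_PhiPhi a)
    ((continuous_Phi.mul (continuous_phi.comp (continuous_const.sub continuous_id))).aestronglyMeasurable)
    (ae_of_all _ fun u x hx => ?_) hbound_int
    (ae_of_all _ fun u x _ => ?_)
  · have h2 := key.2
    have h3 : (∫ u, Phi u * phi (a - u)) = Phi (a / Real.sqrt 2) := by
      rw [← integral_reflect (fun u => Phi u * phi (a - u)) a]
      have he : (fun v => (fun u => Phi u * phi (a - u)) (a - v)) = fun v => phi v * Phi (a - v) := by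
        funext v
        simp only []
        have h4 : a - (a - v) = v := by ring
        rw [h4, mul_comm]
      rw [he, conv_phi_Phi]
    rwa [h3] at h2
  · rw [Real.norm_eq_abs, abs_of_nonneg (mul_nonneg (Phi_nonneg _) (phi_nonneg _))]
    have h1 : Phi u * phi (x - u) ≤ phi (x - u) := by
      nth_rewrite 2 [← one_mul (phi (x - u))]
      exact mul_le_mul_of_nonneg_right (Phi_le_one u) (phi_nonneg _)
    refine h1.trans ?_
    rw [phi, div_eq_inv_mul]
    rw [mul_assoc, ← Real.exp_add]
    apply mul_le_mul_of_nonneg_left _ (by positivity)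
    apply Real.exp_le_exp.2
    have hq : |x - a| < 1 := by simpa [Real.dist_eq] using hx
    have hq2 : (x - a)^2 < 1 := by
      have := abs_lt.1 hq
      nlinarith
    nlinarith [sq_nonneg ((u - a) - 2*(x - a))]
  · have h1 : HasDerivAt (fun x : ℝ => x - u) 1 x := (hasDerivAt_id x).sub_const u
    have h2 := (hasDerivAt_Phi (x - u)).comp x h1
    rw [mul_one] at h2
    exact h2.const_mul (Phi u)

lemma tendsto_F_atBot : Tendsto (fun a => ∫ u, Phi u * Phi (a - u)) atBot (𝓝 0) := by
  have h0 : (∫ t : ℝ, (0:ℝ)) = 0 := integral_zero _ _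
  rw [← h0]
  apply tendsto_integral_filter_of_dominated_convergence (fun u => Phi u * Phi (0 - u))
  · exact Eventually.of_forall fun x =>
      ((continuous_Phi.mul (continuous_Phi.comp (continuous_const.sub continuous_id))).aestronglyMeasurable)
  · filter_upwards [eventually_le_atBot (0:ℝ)] with a ha
    refine ae_of_all _ fun u => ?_
    rw [Real.norm_eq_abs, abs_of_nonneg (mul_nonneg (Phi_nonneg _) (Phi_nonneg _))]
    exact mul_le_mul_of_nonneg_left (Phi_mono (by linarith)) (Phi_nonneg _)
  · exact integrable_PhiPhi 0
  · refine ae_of_all _ fun u => ?_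
    have h1 : Tendsto (fun a : ℝ => a - u) atBot atBot := tendsto_atBot_add_const_right _ (-u)
      (by exact tendsto_id)
    have h2 : Tendsto (fun a : ℝ => Phi (a - u)) atBot (𝓝 0) := by
      have := tendsto_Phi_atBot.comp h1
      simpa [Function.comp_def, sub_eq_add_neg] using this
    simpa using h2.const_mul (Phi u)

lemma hasDerivAt_phi (x : ℝ) : HasDerivAt phi (-(x * phi x)) x := by
  have h1 : HasDerivAt (fun t : ℝ => -t^2/2) (-x) x := by
    have := ((hasDerivAt_pow 2 x).neg).div_const 2
    simpa using this.congr_deriv (by ring)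
  have h2 := (Real.hasDerivAt_exp (-x^2/2)).comp x h1
  have h3 := h2.div_const (Real.sqrt (2*Real.pi))
  simp only [Function.comp] at h3
  have he : (fun t : ℝ => Real.exp (-t^2/2) / Real.sqrt (2*Real.pi)) = phi := by
    funext t; rw [phi]
  rw [he] at h3
  refine h3.congr_deriv ?_
  simp only [phi]
  ring

lemma hasDerivAt_G (a : ℝ) :
    HasDerivAt (fun x : ℝ => x * Phi (x / Real.sqrt 2) + Real.sqrt 2 * phi (x / Real.sqrt 2))
      (Phi (a / Real.sqrt 2)) a := by
  have hdiv : HasDerivAt (fun x : ℝ => x / Real.sqrt 2) (Real.sqrt 2)⁻¹ a := by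
    simpa [one_div] using (hasDerivAt_id a).div_const (Real.sqrt 2)
  have hA : HasDerivAt (fun x : ℝ => x * Phi (x / Real.sqrt 2))
      (1 * Phi (a / Real.sqrt 2) + a * (phi (a / Real.sqrt 2) * (Real.sqrt 2)⁻¹)) a :=
    (hasDerivAt_id a).mul (hasDerivAt_R a)
  have hB : HasDerivAt (fun x : ℝ => Real.sqrt 2 * phi (x / Real.sqrt 2))
      (Real.sqrt 2 * (-(a / Real.sqrt 2 * phi (a / Real.sqrt 2)) * (Real.sqrt 2)⁻¹)) a :=
    ((HasDerivAt.comp (h := fun x : ℝ => x / Real.sqrt 2) a (hasDerivAt_phi (a / Real.sqrt 2)) hdiv)).const_mul (Real.sqrt 2)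
  have := hA.add hB
  refine this.congr_deriv ?_
  have hs : Real.sqrt 2 ≠ 0 := sqrt_two_pos.ne'
  have h2 : Real.sqrt 2 * Real.sqrt 2 = 2 := Real.mul_self_sqrt (by norm_num)
  have e1 : Real.sqrt 2 * (-(a / Real.sqrt 2 * phi (a / Real.sqrt 2)) * (Real.sqrt 2)⁻¹)
      = -(a / Real.sqrt 2 * phi (a / Real.sqrt 2)) := by
    field_simp
  have e2 : a * (phi (a / Real.sqrt 2) * (Real.sqrt 2)⁻¹)
      = a / Real.sqrt 2 * phi (a / Real.sqrt 2) := by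
    rw [div_eq_mul_inv]; ring
  rw [e1, e2]; ring

lemma tendsto_phi_atBot : Tendsto phi atBot (𝓝 0) := by
  have hup : Tendsto (fun t : ℝ => (Real.sqrt (2*Real.pi))⁻¹ * Real.exp (2⁻¹ + t))
      atBot (𝓝 0) := by
    have h1 : Tendsto (fun t : ℝ => (2⁻¹ : ℝ) + t) atBot atBot :=
      tendsto_atBot_add_const_left _ _ tendsto_id
    have := (Real.tendsto_exp_atBot.comp h1).const_mul ((Real.sqrt (2*Real.pi))⁻¹)
    simpa [Function.comp] using this
  refine tendsto_of_tendsto_of_tendsto_of_le_of_le' tendsto_const_nhds hup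
    (Eventually.of_forall fun t => phi_nonneg t) (Eventually.of_forall fun t => ?_)
  rw [phi, div_eq_inv_mul]
  apply mul_le_mul_of_nonneg_left _ (by positivity)
  exact Real.exp_le_exp.2 (by nlinarith [sq_nonneg (t+1)])

lemma tendsto_xexp_atBot :
    Tendsto (fun a : ℝ => a * Real.exp (a / Real.sqrt 2)) atBot (𝓝 0) := by
  have hs : Real.sqrt 2 ≠ 0 := sqrt_two_pos.ne'
  have hg : Tendsto (fun a : ℝ => -(a / Real.sqrt 2)) atBot atTop :=
    tendsto_neg_atBot_atTop.comp (tendsto_id.atBot_div_const sqrt_two_pos)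
  have h1 := (tendsto_pow_mul_exp_neg_atTop_nhds_zero 1).comp hg
  have h2 := h1.const_mul (-(Real.sqrt 2))
  rw [mul_zero] at h2
  refine h2.congr fun a => ?_
  simp only [Function.comp, pow_one, neg_neg]
  rw [show -Real.sqrt 2 * (-(a / Real.sqrt 2) * Real.exp (a / Real.sqrt 2))
    = (a / Real.sqrt 2 * Real.sqrt 2) * Real.exp (a / Real.sqrt 2) from by ring,
    div_mul_cancel₀ _ hs]

lemma tendsto_aPhi_atBot :
    Tendsto (fun a : ℝ => a * Phi (a / Real.sqrt 2)) atBot (𝓝 0) := by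
  have hlow : Tendsto (fun a : ℝ => Real.exp (2⁻¹) * (a * Real.exp (a / Real.sqrt 2)))
      atBot (𝓝 0) := by
    have := tendsto_xexp_atBot.const_mul (Real.exp (2⁻¹:ℝ))
    simpa using this
  refine tendsto_of_tendsto_of_tendsto_of_le_of_le' hlow tendsto_const_nhds ?_ ?_
  · filter_upwards [eventually_le_atBot (0:ℝ)] with a ha
    have h1 := mul_le_mul_of_nonpos_left (Phi_le_exp (a / Real.sqrt 2)) ha
    calc Real.exp (2⁻¹) * (a * Real.exp (a / Real.sqrt 2))
        = a * (Real.exp (2⁻¹) * Real.exp (a / Real.sqrt 2)) := by ring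
    _ ≤ a * Phi (a / Real.sqrt 2) := h1
  · filter_upwards [eventually_le_atBot (0:ℝ)] with a ha
    exact mul_nonpos_iff.2 (Or.inr ⟨ha, Phi_nonneg _⟩)

lemma tendsto_G_atBot :
    Tendsto (fun a : ℝ => a * Phi (a / Real.sqrt 2) + Real.sqrt 2 * phi (a / Real.sqrt 2))
      atBot (𝓝 0) := by
  have hdiv : Tendsto (fun a : ℝ => a / Real.sqrt 2) atBot atBot :=
    tendsto_id.atBot_div_const sqrt_two_pos
  have h1 : Tendsto (fun a : ℝ => Real.sqrt 2 * phi (a / Real.sqrt 2)) atBot (𝓝 0) := by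
    have := (tendsto_phi_atBot.comp hdiv).const_mul (Real.sqrt 2)
    simpa [Function.comp] using this
  simpa using tendsto_aPhi_atBot.add h1

lemma F_eq (a : ℝ) : ∫ u, Phi u * Phi (a - u)
    = a * Phi (a / Real.sqrt 2) + Real.sqrt 2 * phi (a / Real.sqrt 2) := by
  set L := fun a : ℝ => ∫ u, Phi u * Phi (a - u) with hLdef
  set G := fun a : ℝ => a * Phi (a / Real.sqrt 2) + Real.sqrt 2 * phi (a / Real.sqrt 2) with hGdef
  have hder : ∀ x : ℝ, HasDerivAt (fun y => L y - G y) 0 x := by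
    intro x
    have h4 := (hasDerivAt_F x).sub (hasDerivAt_G x); rw [sub_self] at h4; exact h4
  have hconst : ∀ x y : ℝ, L x - G x = L y - G y := fun x y =>
    is_const_of_deriv_eq_zero (fun z => (hder z).differentiableAt) (fun z => (hder z).deriv) x y
  have h0 : Tendsto (fun x => L x - G x) atBot (𝓝 0) := by
    simpa using tendsto_F_atBot.sub tendsto_G_atBot
  have h1 : Tendsto (fun x => L x - G x) atBot (𝓝 (L a - G a)) := by
    have he : (fun x => L x - G x) = fun _ => L a - G a := funext fun x => hconst x a
    rw [he]; exact tendsto_const_nhds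
  have h2 : L a - G a = 0 := tendsto_nhds_unique h1 h0
  have h3 : L a = G a := by linarith
  exact h3

lemma integrable_single {σ : ℝ} (hσ : 0 < σ) (b d : ℝ) :
    Integrable (fun t => Phi ((t - b) / σ) * Phi ((d - t) / σ)) := by
  have hfun : (fun t => Phi ((t - b) / σ) * Phi ((d - t) / σ))
      = fun t => (fun t' => Phi (σ⁻¹ * t') * Phi ((d - b)/σ - σ⁻¹ * t')) (t - b) := by
    funext t
    simp only []
    have e1 : (t - b)/σ = σ⁻¹ * (t - b) := div_eq_inv_mul _ _
    have e2 : (d - t)/σ = (d - b)/σ - σ⁻¹ * (t - b) := by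
      field_simp
      ring
    rw [e1, e2]
  rw [hfun]
  have h1 : Integrable (fun t' => Phi (σ⁻¹ * t') * Phi ((d - b)/σ - σ⁻¹ * t')) := by
    have := (integrable_comp_smul_iff volume (fun x => Phi x * Phi ((d - b)/σ - x))
      (inv_ne_zero hσ.ne')).2 (integrable_PhiPhi ((d - b)/σ))
    simpa [smul_eq_mul] using this
  exact h1.comp_sub_right b

lemma key_single {σ : ℝ} (hσ : 0 < σ) (b d : ℝ) :
    ∫ t, Phi ((t - b) / σ) * Phi ((d - t) / σ)
      = (d - b) * Phi ((d - b) / (Real.sqrt 2 * σ))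
        + Real.sqrt 2 * σ * phi ((d - b) / (Real.sqrt 2 * σ)) := by
  set a := (d - b) / σ with ha
  have hfun : (fun t => Phi ((t - b) / σ) * Phi ((d - t) / σ))
      = fun t => (fun t' => Phi (σ⁻¹ * t') * Phi (a - σ⁻¹ * t')) (t - b) := by
    funext t
    simp only []
    have e1 : (t - b)/σ = σ⁻¹ * (t - b) := div_eq_inv_mul _ _
    have e2 : (d - t)/σ = a - σ⁻¹ * (t - b) := by
      rw [ha]; field_simp; ring
    rw [e1, e2]
  rw [hfun, integral_sub_right_eq_self (fun t' => Phi (σ⁻¹ * t') * Phi (a - σ⁻¹ * t')) b]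
  have h2 : (∫ x, Phi (σ⁻¹ * x) * Phi (a - σ⁻¹ * x)) = |σ| • ∫ x, Phi x * Phi (a - x) :=
    Measure.integral_comp_inv_mul_left (fun x => Phi x * Phi (a - x)) σ
  rw [h2, abs_of_pos hσ, smul_eq_mul, F_eq a]
  have harg : a / Real.sqrt 2 = (d - b) / (Real.sqrt 2 * σ) := by
    rw [ha, div_div, mul_comm]
  rw [harg]
  have hsa : σ * a = d - b := by
    rw [ha, mul_div_cancel₀ _ hσ.ne']
  linear_combination (Phi ((d - b) / (Real.sqrt 2 * σ))) * hsa

theorem stmt9 (D : Multiset (ℝ × ℝ)) (hD : ∀ p ∈ D, p.1 < p.2) (σ : ℝ) (hσ : 0 < σ) :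
    ∫ t : ℝ, |(D.map (fun p => Phi ((t - p.1) / σ) * Phi ((p.2 - t) / σ))).sum| =
      (D.map (fun p => (p.2 - p.1) * Phi ((p.2 - p.1) / (Real.sqrt 2 * σ)) +
        Real.sqrt 2 * σ * phi ((p.2 - p.1) / (Real.sqrt 2 * σ)))).sum := by
  have hnn : ∀ t : ℝ, 0 ≤ (D.map (fun p => Phi ((t - p.1) / σ) * Phi ((p.2 - t) / σ))).sum := by
    intro t
    apply Multiset.sum_nonneg
    intro x hx
    obtain ⟨p, _, rfl⟩ := Multiset.mem_map.1 hx
    exact mul_nonneg (Phi_nonneg _) (Phi_nonneg _)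
  have habs : (fun t : ℝ => |(D.map (fun p => Phi ((t - p.1) / σ) * Phi ((p.2 - t) / σ))).sum|)
      = fun t : ℝ => (D.map (fun p => Phi ((t - p.1) / σ) * Phi ((p.2 - t) / σ))).sum :=
    funext fun t => abs_of_nonneg (hnn t)
  rw [habs]
  clear hD hnn habs
  have hint : ∀ E : Multiset (ℝ × ℝ),
      Integrable (fun t => (E.map (fun p => Phi ((t - p.1) / σ) * Phi ((p.2 - t) / σ))).sum) := by
    intro E
    induction E using Multiset.induction_on with
    | empty =>
      simp only [Multiset.map_zero, Multiset.sum_zero]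
      exact integrable_zero _ _ _
    | cons p E ih =>
      simp only [Multiset.map_cons, Multiset.sum_cons]
      exact (integrable_single hσ p.1 p.2).add ih
  induction D using Multiset.induction_on with
  | empty => simp
  | cons p E ih =>
    simp only [Multiset.map_cons, Multiset.sum_cons]
    rw [integral_add (integrable_single hσ p.1 p.2) (hint E), key_single hσ p.1 p.2, ih]
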